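/- For every m ∈ ℕ^l the following identity holds in F = ℚ(q, z_1,…,z_l): ∑_{0 ≤ a ≤ m} J_a(z^{−1}·q^{−Ca+2}) · J_{m−a}(z·q^{Ca}) = ∏_{i=1}^l 1/(q)_{m_i}, where J_a(z^{−1}·q^{−Ca+2}) denotes the image of J_a under the substitution z_i ↦ z_i^{−1} q^{−(Ca)_i + 2}, J_{m−a}(z·q^{Ca}) the image of J_{m−a} under z_i ↦ z_i q^{(Ca)_i}, and (Ca)_i = ∑_j C_{ij} a_j. (In the notation of the paper: ∑_{α ∈ Q_+} J^{α−λ−2ρ}_α J^{λ−α}_{β−α} = 1/(q)_β for simply-laced g.) -/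

import Mathlib

/- STATEMENT 16: in F = ℚ(q,z_1,…,z_l), for a simply-laced Cartan matrix C:
     ∑_{0≤a≤m} J_a(z⁻¹·q^{−Ca+2}) · J_{m−a}(z·q^{Ca}) = ∏_i 1/(q)_{m_i},
   where the substituted J's are the (unique) solutions of the fermionic
   recursion in the substituted variables. -/

noncomputable section

open scoped BigOperators

/-- The field ℚ(q, z_1, …, z_l). -/
abbrev F16 (l : ℕ) : Type := FractionRing (MvPolynomial (Fin (l + 1)) ℚ)

/-- the variable q -/
def q16 (l : ℕ) : F16 l :=
  algebraMap (MvPolynomial (Fin (l + 1)) ℚ) (F16 l) (MvPolynomial.X 0)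

/-- the variables z_i -/
def z16 (l : ℕ) (i : Fin l) : F16 l :=
  algebraMap (MvPolynomial (Fin (l + 1)) ℚ) (F16 l) (MvPolynomial.X i.succ)

/-- `W(a) = (1/2)∑ C_{ij} a_i a_j − ∑ a_i`  (the double sum is even, so integer
division by 2 gives the exact value). -/
def W16 {l : ℕ} (C : Matrix (Fin l) (Fin l) ℤ) (a : Fin l → ℕ) : ℤ :=
  (∑ i, ∑ j, C i j * a i * a j) / 2 - ∑ i, (a i : ℤ)

/-- `(Ca)_i = ∑_j C_{ij} a_j` -/
def Cv {l : ℕ} (C : Matrix (Fin l) (Fin l) ℤ) (a : Fin l → ℕ) (i : Fin l) : ℤ :=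
  ∑ j, C i j * a j

/-- `(q)_n = ∏_{k=1}^n (1 − q^k)` -/
def qP {F : Type} [Field F] (q : F) (n : ℕ) : F :=
  ∏ k ∈ Finset.range n, (1 - q ^ (k + 1))

/-- `J` is the family satisfying `J 0 = 1` and the fermionic recursion with
variables `q`, `z` (simply-laced case). -/
def IsFermC {l : ℕ} (C : Matrix (Fin l) (Fin l) ℤ)
    {F : Type} [Field F] (q : F) (z : Fin l → F) (J : (Fin l → ℕ) → F) : Prop :=
  J 0 = 1 ∧ ∀ m : Fin l → ℕ, J m = ∑ a ∈ Finset.Iic m,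
    (∏ i, z i ^ a i) * q ^ (W16 C a) *
      (∏ i, qP q (m i - a i))⁻¹ * J a

lemma amap_inj (l : ℕ) : Function.Injective
    (algebraMap (MvPolynomial (Fin (l + 1)) ℚ) (F16 l)) :=
  IsFractionRing.injective _ _

lemma q16_ne_zero (l : ℕ) : q16 l ≠ 0 := by
  intro h
  have := amap_inj l (h.trans (map_zero _).symm)
  exact MvPolynomial.X_ne_zero _ this

lemma z16_ne_zero (l : ℕ) (i : Fin l) : z16 l i ≠ 0 := by
  intro h
  have := amap_inj l (h.trans (map_zero _).symm)
  exact MvPolynomial.X_ne_zero _ this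

lemma q16_pow_ne_one (l : ℕ) (k : ℕ) (hk : k ≠ 0) : q16 l ^ k ≠ 1 := by
  intro h
  have h2 : algebraMap (MvPolynomial (Fin (l + 1)) ℚ) (F16 l) (MvPolynomial.X 0 ^ k)
      = algebraMap (MvPolynomial (Fin (l + 1)) ℚ) (F16 l) 1 := by
    rw [map_pow, map_one]; exact h
  have h3 := amap_inj l h2
  have h4 := congrArg (MvPolynomial.eval (fun _ => (0:ℚ))) h3
  simp [zero_pow hk] at h4

lemma qP_ne_zero (l : ℕ) (n : ℕ) : qP (q16 l) n ≠ 0 := by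
  apply Finset.prod_ne_zero_iff.2
  intro k _
  intro h
  have : q16 l ^ (k+1) = 1 := by
    have := sub_eq_zero.mp h
    exact this.symm
  exact q16_pow_ne_one l (k+1) (Nat.succ_ne_zero k) this

lemma zpow_toNat_form {F : Type} [Field F] (x : F) (hx : x ≠ 0) (e : ℤ) :
    x ^ e = x ^ e.toNat * (x ^ (-e).toNat)⁻¹ := by
  rcases le_or_gt 0 e with he | he
  · have h0 : (-e).toNat = 0 := by omega
    have h1 : x ^ e = x ^ e.toNat := by
      rw [← zpow_natCast, Int.toNat_of_nonneg he]
    rw [h0, pow_zero, inv_one, mul_one, h1]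
  · have h1 : e.toNat = 0 := by omega
    have h2 : ((-e).toNat : ℤ) = -e := by omega
    rw [h1, pow_zero, one_mul, ← zpow_natCast, h2, zpow_neg, inv_inv]

/-- key nonvanishing: `z^β q^e ≠ 1` for `β ≠ 0`. -/
lemma monomial_ne_one (l : ℕ) (β : Fin l → ℕ) (e : ℤ) (hβ : β ≠ 0) :
    (∏ i, z16 l i ^ β i) * q16 l ^ e ≠ 1 := by
  intro h
  obtain ⟨i0, hi0⟩ : ∃ i, β i ≠ 0 := by
    by_contra hc
    push_neg at hc
    exact hβ (funext hc)
  rw [zpow_toNat_form _ (q16_ne_zero l) e] at h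
  have hq := q16_ne_zero l
  have h2 : (∏ i, z16 l i ^ β i) * q16 l ^ e.toNat = q16 l ^ (-e).toNat := by
    field_simp at h
    exact h
  have h3 : algebraMap (MvPolynomial (Fin (l + 1)) ℚ) (F16 l)
      ((∏ i, MvPolynomial.X i.succ ^ β i) * MvPolynomial.X 0 ^ e.toNat)
      = algebraMap (MvPolynomial (Fin (l + 1)) ℚ) (F16 l) (MvPolynomial.X 0 ^ (-e).toNat) := by
    rw [map_mul, map_prod, map_pow]
    simp_rw [map_pow]
    exact h2
  have h4 := amap_inj l h3
  have h5 := congrArg (MvPolynomial.eval (fun j => if j = i0.succ then (0:ℚ) else 1)) h4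
  rw [MvPolynomial.eval_mul, MvPolynomial.eval_prod] at h5
  simp only [MvPolynomial.eval_pow, MvPolynomial.eval_X] at h5
  have hfac : (∏ i, (if (i.succ : Fin (l+1)) = i0.succ then (0:ℚ) else 1) ^ β i) = 0 := by
    apply Finset.prod_eq_zero (Finset.mem_univ i0)
    simp [zero_pow hi0]
  rw [hfac, zero_mul] at h5
  have : (if (0 : Fin (l+1)) = i0.succ then (0:ℚ) else 1) = 1 := by
    simp [(Fin.succ_ne_zero i0).symm]
  rw [this, one_pow] at h5
  exact zero_ne_one h5
def eps {F : Type} [Field F] (q : F) (d : ℕ) : F :=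
  (-1) ^ d * q ^ d.choose 2 * (qP q d)⁻¹

lemma qP_succ {F : Type} [Field F] (q : F) (n : ℕ) :
    qP q (n + 1) = qP q n * (1 - q ^ (n + 1)) :=
  Finset.prod_range_succ _ _

lemma qP_zero {F : Type} [Field F] (q : F) : qP q 0 = 1 := rfl

lemma eps_zero {F : Type} [Field F] (q : F) : eps q 0 = 1 := by
  simp [eps, qP_zero]

lemma one_sub_qpow_ne (l : ℕ) (k : ℕ) (hk : k ≠ 0) : (1 : F16 l) - q16 l ^ k ≠ 0 := by
  intro h
  exact q16_pow_ne_one l k hk (by linear_combination -h)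

lemma choose_two_succ (d : ℕ) : (d + 1).choose 2 = d.choose 2 + d := by
  rw [show (2:ℕ) = 1 + 1 from rfl, Nat.choose_succ_succ, Nat.choose_one_right]
  exact Nat.add_comm _ _

lemma qP_pred_inv (l : ℕ) (n : ℕ) (hn : n ≠ 0) :
    (1 - q16 l ^ n) * (qP (q16 l) n)⁻¹ = (qP (q16 l) (n - 1))⁻¹ := by
  have h1 : qP (q16 l) n = qP (q16 l) (n - 1) * (1 - q16 l ^ n) := by
    have h := qP_succ (q16 l) (n - 1)
    rwa [show n - 1 + 1 = n by omega] at h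
  have hne := one_sub_qpow_ne l n hn
  rw [h1, mul_inv, mul_comm ((qP (q16 l) (n - 1))⁻¹), ← mul_assoc,
    mul_inv_cancel₀ hne, one_mul]

lemma euler_rel (l : ℕ) (n : ℕ) (hn : n ≠ 0) :
    (1 - q16 l ^ n) * ∑ d ∈ Finset.range (n + 1), eps (q16 l) d * (qP (q16 l) (n - d))⁻¹
      = (1 - q16 l ^ (n - 1)) *
        ∑ d ∈ Finset.range n, eps (q16 l) d * (qP (q16 l) (n - 1 - d))⁻¹ := by
  have key : ∀ d ∈ Finset.range (n + 1),
      (1 - q16 l ^ n) * (eps (q16 l) d * (qP (q16 l) (n - d))⁻¹)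
        = (if d < n then eps (q16 l) d * (qP (q16 l) (n - 1 - d))⁻¹ else 0)
          + (if d = 0 then 0 else
              (-1) ^ d * q16 l ^ (d.choose 2 + (n - d)) *
                ((qP (q16 l) (d - 1))⁻¹ * (qP (q16 l) (n - d))⁻¹)) := by
    intro d hd
    rw [Finset.mem_range] at hd
    rcases Nat.eq_zero_or_pos d with hd0 | hd0
    · subst hd0
      rw [if_pos (by omega : 0 < n), if_pos rfl, add_zero, Nat.sub_zero, Nat.sub_zero,
        eps_zero, one_mul, one_mul, qP_pred_inv l n hn]
    · rcases eq_or_lt_of_le (by omega : d ≤ n) with hdn' | hdn'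
      · subst hdn'
        rw [if_neg (lt_irrefl d), if_neg (by omega : ¬ d = 0), zero_add, Nat.sub_self,
          qP_zero, inv_one, mul_one, add_zero, eps]
        have h := qP_pred_inv l d (by omega)
        linear_combination ((-1 : F16 l) ^ d * q16 l ^ d.choose 2) * h
      · rw [if_pos hdn', if_neg (by omega : ¬ d = 0), eps]
        have i1 := qP_pred_inv l d (by omega)
        have i2h := qP_pred_inv l (n - d) (by omega : n - d ≠ 0)
        have i2 : (1 - q16 l ^ (n - d)) * (qP (q16 l) (n - d))⁻¹
            = (qP (q16 l) (n - 1 - d))⁻¹ := by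
          rwa [show n - d - 1 = n - 1 - d by omega] at i2h
        have e3 : q16 l ^ n = q16 l ^ (n - d) * q16 l ^ d := by
          rw [← pow_add]; congr 1; omega
        have e4 : q16 l ^ (d.choose 2 + (n - d))
            = q16 l ^ d.choose 2 * q16 l ^ (n - d) := pow_add _ _ _
        rw [e3, e4]
        linear_combination ((-1 : F16 l) ^ d * q16 l ^ d.choose 2 * (qP (q16 l) d)⁻¹) * i2
          + ((-1 : F16 l) ^ d * q16 l ^ d.choose 2 * q16 l ^ (n - d)
              * (qP (q16 l) (n - d))⁻¹) * i1
  rw [Finset.mul_sum, Finset.sum_congr rfl key, Finset.sum_add_distrib]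
  have hA : ∑ d ∈ Finset.range (n + 1),
      (if d < n then eps (q16 l) d * (qP (q16 l) (n - 1 - d))⁻¹ else 0)
      = ∑ d ∈ Finset.range n, eps (q16 l) d * (qP (q16 l) (n - 1 - d))⁻¹ := by
    rw [Finset.sum_range_succ, if_neg (lt_irrefl n), add_zero]
    exact Finset.sum_congr rfl fun d hd => if_pos (Finset.mem_range.mp hd)
  have hB : ∑ d ∈ Finset.range (n + 1),
      (if d = 0 then 0 else
        (-1) ^ d * q16 l ^ (d.choose 2 + (n - d)) *
          ((qP (q16 l) (d - 1))⁻¹ * (qP (q16 l) (n - d))⁻¹))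
      = -q16 l ^ (n - 1) * ∑ d ∈ Finset.range n, eps (q16 l) d * (qP (q16 l) (n - 1 - d))⁻¹ := by
    rw [Finset.sum_range_succ', if_pos rfl, add_zero, Finset.mul_sum]
    refine Finset.sum_congr rfl fun d hd => ?_
    rw [Finset.mem_range] at hd
    rw [if_neg (Nat.succ_ne_zero d)]
    have e1 : (d + 1).choose 2 + (n - (d + 1)) = (n - 1) + d.choose 2 := by
      rw [choose_two_succ]; omega
    have e2 : n - (d + 1) = n - 1 - d := by omega
    rw [e1, e2, Nat.add_sub_cancel, pow_add, pow_succ, eps]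
    ring
  rw [hA, hB]
  ring

lemma euler1_ne (l : ℕ) : ∀ n : ℕ, n ≠ 0 →
    ∑ d ∈ Finset.range (n + 1), eps (q16 l) d * (qP (q16 l) (n - d))⁻¹ = 0 := by
  intro n
  induction n with
  | zero => intro h; exact absurd rfl h
  | succ m ih =>
    intro _
    have hrel := euler_rel l (m + 1) (Nat.succ_ne_zero m)
    rw [Nat.add_sub_cancel] at hrel
    have hR : (1 - q16 l ^ m) *
        ∑ d ∈ Finset.range (m + 1), eps (q16 l) d * (qP (q16 l) (m - d))⁻¹ = 0 := by
      rcases Nat.eq_zero_or_pos m with hm | hm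
      · subst hm; simp
      · rw [ih (by omega), mul_zero]
    rw [hR] at hrel
    rcases mul_eq_zero.mp hrel with h | h
    · exact absurd h (one_sub_qpow_ne l (m + 1) (Nat.succ_ne_zero m))
    · exact h

lemma euler1 (l : ℕ) (n : ℕ) :
    ∑ d ∈ Finset.range (n + 1), eps (q16 l) d * (qP (q16 l) (n - d))⁻¹
      = if n = 0 then 1 else 0 := by
  rcases Nat.eq_zero_or_pos n with hn | hn
  · subst hn; simp [eps_zero, qP_zero]
  · rw [if_neg (by omega)]
    exact euler1_ne l n (by omega)
def epsM (l : ℕ) (n : Fin l → ℕ) : F16 l := ∏ i, eps (q16 l) (n i)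

lemma epsM_zero (l : ℕ) : epsM l 0 = 1 := by
  simp [epsM, eps_zero]

lemma Nat_Iic_range (n : ℕ) : Finset.Iic n = Finset.range (n + 1) := by
  ext x; simp [Nat.lt_succ_iff]

lemma Iic_pi_eq (l : ℕ) (n : Fin l → ℕ) :
    Finset.Iic n = Fintype.piFinset (fun i => Finset.Iic (n i)) := by
  ext x
  simp [Fintype.mem_piFinset, Pi.le_def]

lemma le_of_mem_Iic {l : ℕ} {a n : Fin l → ℕ} (ha : a ∈ Finset.Iic n) (i : Fin l) :
    a i ≤ n i := Finset.mem_Iic.mp ha i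

lemma sub_sub_cancel_pi {l : ℕ} {a n : Fin l → ℕ} (ha : a ∈ Finset.Iic n) :
    n - (n - a) = a := by
  funext i
  have h2 : a i ≤ n i := le_of_mem_Iic ha i
  simp only [Pi.sub_apply]
  omega

lemma eulerM (l : ℕ) (n : Fin l → ℕ) :
    ∑ d ∈ Finset.Iic n, epsM l d * ∏ i, (qP (q16 l) (n i - d i))⁻¹
      = if n = 0 then 1 else 0 := by
  have h1 : ∀ d : Fin l → ℕ, epsM l d * ∏ i, (qP (q16 l) (n i - d i))⁻¹
      = ∏ i, (eps (q16 l) (d i) * (qP (q16 l) (n i - d i))⁻¹) := by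
    intro d
    rw [epsM, ← Finset.prod_mul_distrib]
  simp_rw [h1]
  rw [Iic_pi_eq, ← Finset.prod_univ_sum (fun i => Finset.Iic (n i))
    (fun i y => eps (q16 l) y * (qP (q16 l) (n i - y))⁻¹)]
  have h2 : ∀ i : Fin l, ∑ x ∈ Finset.Iic (n i),
      eps (q16 l) x * (qP (q16 l) (n i - x))⁻¹ = if n i = 0 then 1 else 0 := by
    intro i
    rw [Nat_Iic_range]
    exact euler1 l (n i)
  rw [Finset.prod_congr rfl (fun i _ => h2 i)]
  by_cases hn : n = 0
  · subst hn
    simp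
  · have : ∃ i, n i ≠ 0 := by
      by_contra hc
      push_neg at hc
      exact hn (funext hc)
    obtain ⟨i0, hi0⟩ := this
    rw [if_neg hn]
    exact Finset.prod_eq_zero (Finset.mem_univ i0) (by rw [if_neg hi0])

lemma eulerM' (l : ℕ) (n : Fin l → ℕ) :
    ∑ d ∈ Finset.Iic n, epsM l (n - d) * ∏ i, (qP (q16 l) (d i))⁻¹
      = if n = 0 then 1 else 0 := by
  rw [← eulerM l n]
  apply Finset.sum_nbij' (fun d => n - d) (fun d => n - d)
  · intro a ha
    rw [Finset.mem_Iic] at *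
    intro i
    exact Nat.sub_le _ _
  · intro a ha
    rw [Finset.mem_Iic] at *
    intro i
    exact Nat.sub_le _ _
  · intro a ha
    exact sub_sub_cancel_pi ha
  · intro a ha
    exact sub_sub_cancel_pi ha
  · intro a ha
    refine congrArg₂ (· * ·) rfl ?_
    refine Finset.prod_congr rfl fun j _ => ?_
    have h2 : a j ≤ n j := le_of_mem_Iic ha j
    rw [show n j - (n - a) j = a j from by simp only [Pi.sub_apply]; omega]
def Bl {l : ℕ} (C : Matrix (Fin l) (Fin l) ℤ) (a b : Fin l → ℕ) : ℤ :=
  ∑ i, Cv C a i * (b i : ℤ)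

lemma Qeven {l : ℕ} (C : Matrix (Fin l) (Fin l) ℤ) (hsym : C.IsSymm)
    (hdiag : ∀ i, C i i = 2) (a : Fin l → ℕ) :
    Even (∑ i, ∑ j, C i j * (a i : ℤ) * (a j : ℤ)) := by
  have hdvd : ((∑ i, ∑ j, C i j * (a i : ℤ) * (a j : ℤ) : ℤ) : ZMod 2) = 0 := by
    push_cast
    rw [← Finset.sum_product']
    apply Finset.sum_ninvolution (g := fun p => (p.2, p.1))
    · intro p
      have hcc : ((C p.2 p.1 : ℤ) : ZMod 2) = ((C p.1 p.2 : ℤ) : ZMod 2) := by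
        rw [hsym.apply]
      rw [hcc]
      rw [show ((C p.1 p.2 : ℤ) : ZMod 2) * (a p.1 : ZMod 2) * (a p.2 : ZMod 2)
          + ((C p.1 p.2 : ℤ) : ZMod 2) * (a p.2 : ZMod 2) * (a p.1 : ZMod 2)
          = 2 * (((C p.1 p.2 : ℤ) : ZMod 2) * (a p.1 : ZMod 2) * (a p.2 : ZMod 2)) from by ring]
      rw [show (2 : ZMod 2) = 0 from rfl, zero_mul]
    · intro p hp hgp
      exfalso
      apply hp
      have h1 : p.2 = p.1 := congrArg Prod.fst hgp
      rw [h1, hdiag p.1]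
      ring_nf
      rw [show (2 : ZMod 2) = 0 from rfl, mul_zero]
    · intro p
      exact Finset.mem_product.mpr ⟨Finset.mem_univ _, Finset.mem_univ _⟩
    · intro p
      rfl
  have h2 : (2 : ℤ) ∣ ∑ i, ∑ j, C i j * (a i : ℤ) * (a j : ℤ) := by
    have := (ZMod.intCast_zmod_eq_zero_iff_dvd _ 2).mp hdvd
    exact_mod_cast this
  obtain ⟨c, hc⟩ := h2
  exact ⟨c, by omega⟩

lemma W16_twice {l : ℕ} (C : Matrix (Fin l) (Fin l) ℤ) (hsym : C.IsSymm)
    (hdiag : ∀ i, C i i = 2) (a : Fin l → ℕ) :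
    2 * W16 C a = (∑ i, ∑ j, C i j * (a i : ℤ) * (a j : ℤ)) - 2 * ∑ i, (a i : ℤ) := by
  obtain ⟨k, hk⟩ := Qeven C hsym hdiag a
  rw [W16]
  omega

lemma Cv_add {l : ℕ} (C : Matrix (Fin l) (Fin l) ℤ) (a b : Fin l → ℕ) (i : Fin l) :
    Cv C (a + b) i = Cv C a i + Cv C b i := by
  simp only [Cv, Pi.add_apply, Nat.cast_add, mul_add, Finset.sum_add_distrib]

lemma Bl_add_left {l : ℕ} (C : Matrix (Fin l) (Fin l) ℤ) (a b c : Fin l → ℕ) :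
    Bl C (a + b) c = Bl C a c + Bl C b c := by
  simp only [Bl, Cv_add, add_mul, Finset.sum_add_distrib]

lemma Bl_add_right {l : ℕ} (C : Matrix (Fin l) (Fin l) ℤ) (a b c : Fin l → ℕ) :
    Bl C a (b + c) = Bl C a b + Bl C a c := by
  simp only [Bl, Pi.add_apply, Nat.cast_add, mul_add, Finset.sum_add_distrib]

lemma Bl_zero_right {l : ℕ} (C : Matrix (Fin l) (Fin l) ℤ) (a : Fin l → ℕ) :
    Bl C a 0 = 0 := by
  simp [Bl]

lemma W16_zero {l : ℕ} (C : Matrix (Fin l) (Fin l) ℤ) : W16 C 0 = 0 := by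
  simp [W16]

lemma Bl_self {l : ℕ} (C : Matrix (Fin l) (Fin l) ℤ) (hsym : C.IsSymm)
    (hdiag : ∀ i, C i i = 2) (a : Fin l → ℕ) :
    Bl C a a = 2 * W16 C a + 2 * ∑ i, (a i : ℤ) := by
  have h1 : Bl C a a = ∑ i, ∑ j, C i j * (a i : ℤ) * (a j : ℤ) := by
    simp only [Bl, Cv, Finset.sum_mul]
    refine Finset.sum_congr rfl fun i _ => Finset.sum_congr rfl fun j _ => by ring
  have h2 := W16_twice C hsym hdiag a
  omega

lemma Qadd {l : ℕ} (C : Matrix (Fin l) (Fin l) ℤ) (hsym : C.IsSymm) (a b : Fin l → ℕ) :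
    (∑ i, ∑ j, C i j * ((a + b) i : ℤ) * ((a + b) j : ℤ))
      = (∑ i, ∑ j, C i j * (a i : ℤ) * (a j : ℤ))
        + (∑ i, ∑ j, C i j * (b i : ℤ) * (b j : ℤ)) + 2 * Bl C a b := by
  have expand : ∀ i j, C i j * ((a + b) i : ℤ) * ((a + b) j : ℤ)
      = C i j * (a i : ℤ) * (a j : ℤ) + C i j * (a i : ℤ) * (b j : ℤ)
        + C i j * (b i : ℤ) * (a j : ℤ) + C i j * (b i : ℤ) * (b j : ℤ) := by
    intro i j
    simp only [Pi.add_apply, Nat.cast_add]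
    ring
  simp_rw [expand, Finset.sum_add_distrib]
  have hX2 : (∑ i, ∑ j, C i j * (b i : ℤ) * (a j : ℤ)) = Bl C a b := by
    simp only [Bl, Cv, Finset.sum_mul]
    refine Finset.sum_congr rfl fun i _ => Finset.sum_congr rfl fun j _ => by ring
  have hX1 : (∑ i, ∑ j, C i j * (a i : ℤ) * (b j : ℤ)) = Bl C a b := by
    rw [Finset.sum_comm]
    simp only [Bl, Cv, Finset.sum_mul]
    refine Finset.sum_congr rfl fun i _ => Finset.sum_congr rfl fun j _ => ?_
    rw [hsym.apply i j]
  rw [hX1, hX2]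
  ring

lemma Wadd {l : ℕ} (C : Matrix (Fin l) (Fin l) ℤ) (hsym : C.IsSymm)
    (hdiag : ∀ i, C i i = 2) (a b : Fin l → ℕ) :
    W16 C (a + b) = W16 C a + W16 C b + Bl C a b := by
  have h1 := W16_twice C hsym hdiag (a + b)
  have h2 := W16_twice C hsym hdiag a
  have h3 := W16_twice C hsym hdiag b
  have h4 := Qadd C hsym a b
  have h5 : (∑ i, ((a + b) i : ℤ)) = (∑ i, (a i : ℤ)) + ∑ i, (b i : ℤ) := by
    simp only [Pi.add_apply, Nat.cast_add, Finset.sum_add_distrib]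
  omega

lemma exp1 {l : ℕ} (C : Matrix (Fin l) (Fin l) ℤ) (hsym : C.IsSymm)
    (hdiag : ∀ i, C i i = 2) (ν α γ : Fin l → ℕ) :
    Bl C (ν + α) γ + W16 C γ
      = (Bl C ν (α + γ) + W16 C (α + γ)) - (Bl C ν α + W16 C α) := by
  have h1 := Wadd C hsym hdiag α γ
  have h2 := Bl_add_right C ν α γ
  have h3 := Bl_add_left C ν α γ
  omega

lemma exp2 {l : ℕ} (C : Matrix (Fin l) (Fin l) ℤ) (hsym : C.IsSymm)
    (hdiag : ∀ i, C i i = 2) (ν α : Fin l → ℕ) :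
    (∑ i, (-(Cv C (ν + α) i) + 2) * (α i : ℤ)) + W16 C α
      = -(Bl C ν α + W16 C α) := by
  have h1 : (∑ i, (-(Cv C (ν + α) i) + 2) * (α i : ℤ))
      = -Bl C (ν + α) α + 2 * ∑ i, (α i : ℤ) := by
    rw [show -Bl C (ν + α) α + 2 * ∑ i, (α i : ℤ)
        = (∑ i, -(Cv C (ν + α) i * (α i : ℤ))) + ∑ i, 2 * (α i : ℤ) from by
      rw [Bl, ← Finset.sum_neg_distrib, Finset.mul_sum]]
    rw [← Finset.sum_add_distrib]
    refine Finset.sum_congr rfl fun i _ => by ring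
  have h2 := Bl_add_left C ν α α
  have h3 := Bl_self C hsym hdiag α
  omega
def Zp (l : ℕ) (c : Fin l → ℕ) : F16 l := ∏ i, z16 l i ^ c i

lemma Zp_ne_zero (l : ℕ) (c : Fin l → ℕ) : Zp l c ≠ 0 :=
  Finset.prod_ne_zero_iff.2 fun i _ => pow_ne_zero _ (z16_ne_zero l i)

lemma Zp_zero (l : ℕ) : Zp l 0 = 1 := by simp [Zp]

lemma Zp_add (l : ℕ) (a b : Fin l → ℕ) : Zp l (a + b) = Zp l a * Zp l b := by
  rw [Zp, Zp, Zp, ← Finset.prod_mul_distrib]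
  exact Finset.prod_congr rfl fun i _ => by rw [Pi.add_apply, pow_add]

lemma q_zpow_add (l : ℕ) (x y : ℤ) : q16 l ^ (x + y) = q16 l ^ x * q16 l ^ y :=
  zpow_add₀ (q16_ne_zero l) x y

lemma q_zpow_sum (l : ℕ) (f : Fin l → ℤ) :
    ∏ i, q16 l ^ f i = q16 l ^ (∑ i, f i) := by
  classical
  induction (Finset.univ : Finset (Fin l)) using Finset.cons_induction with
  | empty => simp
  | cons a s ha ih => rw [Finset.prod_cons, Finset.sum_cons, q_zpow_add, ih]

lemma zpow_nat_mul (l : ℕ) (e : ℤ) (c : ℕ) :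
    (q16 l ^ e) ^ c = q16 l ^ (e * (c : ℤ)) := by
  rw [← zpow_natCast (q16 l ^ e) c, ← zpow_mul]

lemma prodvar_pos (l : ℕ) {C : Matrix (Fin l) (Fin l) ℤ} (a c : Fin l → ℕ) :
    ∏ i, (z16 l i * q16 l ^ Cv C a i) ^ c i = Zp l c * q16 l ^ Bl C a c := by
  have h : ∀ i : Fin l, (z16 l i * q16 l ^ Cv C a i) ^ c i
      = z16 l i ^ c i * q16 l ^ (Cv C a i * (c i : ℤ)) := by
    intro i
    rw [mul_pow, zpow_nat_mul]
  rw [Finset.prod_congr rfl fun i _ => h i, Finset.prod_mul_distrib, q_zpow_sum]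
  rfl

lemma prodvar_neg (l : ℕ) {C : Matrix (Fin l) (Fin l) ℤ} (a b : Fin l → ℕ) :
    ∏ i, ((z16 l i)⁻¹ * q16 l ^ (-(Cv C a i) + 2)) ^ b i
      = (Zp l b)⁻¹ * q16 l ^ (∑ i, (-(Cv C a i) + 2) * (b i : ℤ)) := by
  have h : ∀ i : Fin l, ((z16 l i)⁻¹ * q16 l ^ (-(Cv C a i) + 2)) ^ b i
      = (z16 l i ^ b i)⁻¹ * q16 l ^ ((-(Cv C a i) + 2) * (b i : ℤ)) := by
    intro i
    rw [mul_pow, inv_pow, zpow_nat_mul]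
  rw [Finset.prod_congr rfl fun i _ => h i, Finset.prod_mul_distrib, q_zpow_sum,
    Finset.prod_inv_distrib]
  rfl

/-- reindexing `(α, c) ↦ (δ, α) = (α + c, α)`. -/
lemma sum_pair_reindex {l : ℕ} {M : Type} [AddCommMonoid M] (β : Fin l → ℕ)
    (f : (Fin l → ℕ) → (Fin l → ℕ) → M) :
    ∑ α ∈ Finset.Iic β, ∑ c ∈ Finset.Iic (β - α), f α c
      = ∑ δ ∈ Finset.Iic β, ∑ α ∈ Finset.Iic δ, f α (δ - α) := by
  rw [Finset.sum_sigma' (Finset.Iic β) (fun α => Finset.Iic (β - α)) (fun α c => f α c),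
    Finset.sum_sigma' (Finset.Iic β) (fun δ => Finset.Iic δ) (fun δ α => f α (δ - α))]
  apply Finset.sum_nbij' (i := fun p => ⟨p.1 + p.2, p.1⟩) (j := fun p => ⟨p.2, p.1 - p.2⟩)
  · rintro ⟨α, c⟩ hp
    rw [Finset.mem_sigma] at *
    obtain ⟨h1, h2⟩ := hp
    constructor
    · rw [Finset.mem_Iic] at *
      intro i
      have e1 : α i ≤ β i := h1 i
      have e2 : c i ≤ β i - α i := h2 i
      show α i + c i ≤ β i
      omega
    · rw [Finset.mem_Iic]
      intro i
      show α i ≤ α i + c i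
      omega
  · rintro ⟨δ, α⟩ hp
    rw [Finset.mem_sigma] at *
    obtain ⟨h1, h2⟩ := hp
    constructor
    · rw [Finset.mem_Iic] at *
      intro i
      have e1 : δ i ≤ β i := h1 i
      have e2 : α i ≤ δ i := h2 i
      show α i ≤ β i
      omega
    · rw [Finset.mem_Iic] at *
      intro i
      have e1 : δ i ≤ β i := h1 i
      have e2 : α i ≤ δ i := h2 i
      show δ i - α i ≤ β i - α i
      omega
  · rintro ⟨α, c⟩ hp
    have h2 : (α + c) - α = c := funext fun i => by
      simp only [Pi.add_apply, Pi.sub_apply]; omega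
    simp only
    rw [h2]
  · rintro ⟨δ, α⟩ hp
    rw [Finset.mem_sigma] at hp
    have h2 : α + (δ - α) = δ := funext fun i => by
      have e2 : α i ≤ δ i := (Finset.mem_Iic.mp hp.2) i
      simp only [Pi.add_apply, Pi.sub_apply]; omega
    simp only
    rw [h2]
  · rintro ⟨α, c⟩ hp
    simp only
    have h2 : (α + c) - α = c := funext fun i => by
      simp only [Pi.add_apply, Pi.sub_apply]; omega
    rw [h2]

/-- reindexing `(α, b) ↦ (d, b) = (α - b, b)`. -/
lemma sum_pair_reindex2 {l : ℕ} {M : Type} [AddCommMonoid M] (δ : Fin l → ℕ)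
    (f : (Fin l → ℕ) → (Fin l → ℕ) → M) :
    ∑ α ∈ Finset.Iic δ, ∑ b ∈ Finset.Iic α, f α b
      = ∑ d ∈ Finset.Iic δ, ∑ b ∈ Finset.Iic (δ - d), f (d + b) b := by
  rw [Finset.sum_sigma' (Finset.Iic δ) (fun α => Finset.Iic α) (fun α b => f α b),
    Finset.sum_sigma' (Finset.Iic δ) (fun d => Finset.Iic (δ - d)) (fun d b => f (d + b) b)]
  apply Finset.sum_nbij' (i := fun p => ⟨p.1 - p.2, p.2⟩) (j := fun p => ⟨p.1 + p.2, p.2⟩)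
  · rintro ⟨α, b⟩ hp
    rw [Finset.mem_sigma] at *
    obtain ⟨h1, h2⟩ := hp
    constructor
    · rw [Finset.mem_Iic] at *
      intro i
      have e1 : α i ≤ δ i := h1 i
      show α i - b i ≤ δ i
      omega
    · rw [Finset.mem_Iic] at *
      intro i
      have e1 : α i ≤ δ i := h1 i
      have e2 : b i ≤ α i := h2 i
      show b i ≤ δ i - (α i - b i)
      omega
  · rintro ⟨d, b⟩ hp
    rw [Finset.mem_sigma] at *
    obtain ⟨h1, h2⟩ := hp
    constructor
    · rw [Finset.mem_Iic] at *
      intro i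
      have e1 : d i ≤ δ i := h1 i
      have e2 : b i ≤ δ i - d i := h2 i
      show d i + b i ≤ δ i
      omega
    · rw [Finset.mem_Iic]
      intro i
      show b i ≤ d i + b i
      omega
  · rintro ⟨α, b⟩ hp
    rw [Finset.mem_sigma] at hp
    have h2 : (α - b) + b = α := funext fun i => by
      have e2 : b i ≤ α i := (Finset.mem_Iic.mp hp.2) i
      simp only [Pi.add_apply, Pi.sub_apply]; omega
    simp only
    rw [h2]
  · rintro ⟨d, b⟩ hp
    have h2 : (d + b) - b = d := funext fun i => by
      simp only [Pi.add_apply, Pi.sub_apply]; omega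
    simp only
    rw [h2]
  · rintro ⟨α, b⟩ hp
    rw [Finset.mem_sigma] at hp
    simp only
    have h2 : (α - b) + b = α := funext fun i => by
      have e2 : b i ≤ α i := (Finset.mem_Iic.mp hp.2) i
      simp only [Pi.add_apply, Pi.sub_apply]; omega
    rw [h2]

/-- swapping a nested Iic-sum. -/
lemma sum_Iic_swap {l : ℕ} {M : Type} [AddCommMonoid M] (m : Fin l → ℕ)
    (f : (Fin l → ℕ) → (Fin l → ℕ) → M) :
    ∑ b ∈ Finset.Iic m, ∑ a ∈ Finset.Iic b, f b a
      = ∑ a ∈ Finset.Iic m, ∑ b ∈ Finset.Icc a m, f b a := by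
  rw [Finset.sum_sigma' (Finset.Iic m) (fun b => Finset.Iic b) (fun b a => f b a),
    Finset.sum_sigma' (Finset.Iic m) (fun a => Finset.Icc a m) (fun a b => f b a)]
  apply Finset.sum_nbij' (i := fun p => ⟨p.2, p.1⟩) (j := fun p => ⟨p.2, p.1⟩)
  · rintro ⟨b, a⟩ hp
    rw [Finset.mem_sigma] at *
    obtain ⟨h1, h2⟩ := hp
    rw [Finset.mem_Iic] at *
    refine ⟨le_trans h2 h1, ?_⟩
    rw [Finset.mem_Icc]
    exact ⟨h2, h1⟩
  · rintro ⟨a, b⟩ hp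
    rw [Finset.mem_sigma] at *
    obtain ⟨h1, h2⟩ := hp
    rw [Finset.mem_Icc] at h2
    exact ⟨Finset.mem_Iic.mpr h2.2, Finset.mem_Iic.mpr h2.1⟩
  · rintro ⟨b, a⟩ _; rfl
  · rintro ⟨a, b⟩ _; rfl
  · rintro ⟨b, a⟩ _; rfl

lemma sum_Icc_shift {l : ℕ} {M : Type} [AddCommMonoid M] (a m : Fin l → ℕ)
    (g : (Fin l → ℕ) → M) (ham : a ≤ m) :
    ∑ b ∈ Finset.Icc a m, g b = ∑ d ∈ Finset.Iic (m - a), g (a + d) := by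
  apply Finset.sum_nbij' (i := fun b => b - a) (j := fun d => a + d)
  · intro b hb
    rw [Finset.mem_Icc] at hb
    rw [Finset.mem_Iic]
    intro i
    have e1 : a i ≤ b i := hb.1 i
    have e2 : b i ≤ m i := hb.2 i
    show b i - a i ≤ m i - a i
    omega
  · intro d hd
    rw [Finset.mem_Iic] at hd
    rw [Finset.mem_Icc]
    constructor
    · intro i
      show a i ≤ a i + d i
      omega
    · intro i
      have e1 : d i ≤ m i - a i := hd i
      have e2 : a i ≤ m i := ham i
      show a i + d i ≤ m i
      omega
  · intro b hb
    rw [Finset.mem_Icc] at hb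
    funext i
    have e1 : a i ≤ b i := hb.1 i
    simp only [Pi.add_apply, Pi.sub_apply]
    omega
  · intro d _
    funext i
    simp only [Pi.add_apply, Pi.sub_apply]
    omega
  · intro b hb
    rw [Finset.mem_Icc] at hb
    have h2 : a + (b - a) = b := funext fun i => by
      have e1 : a i ≤ b i := hb.1 i
      simp only [Pi.add_apply, Pi.sub_apply]
      omega
    rw [h2]

lemma pi_sub_ne_zero {l : ℕ} {a m : Fin l → ℕ} (ham : a ≤ m) (hne : a ≠ m) :
    m - a ≠ 0 := by
  intro h
  apply hne
  funext i
  have h1 : a i ≤ m i := ham i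
  have h2 : m i - a i = 0 := congrFun h i
  omega

/-- the inverse form of the fermionic recursion. -/
lemma inv_rec (l : ℕ) (C : Matrix (Fin l) (Fin l) ℤ) (ζ : Fin l → F16 l)
    (J : (Fin l → ℕ) → F16 l) (hJ : IsFermC C (q16 l) ζ J) (m : Fin l → ℕ) :
    ∑ b ∈ Finset.Iic m, epsM l (m - b) * J b
      = (∏ i, ζ i ^ m i) * q16 l ^ W16 C m * J m := by
  have step1 : ∑ b ∈ Finset.Iic m, epsM l (m - b) * J b
      = ∑ b ∈ Finset.Iic m, ∑ a ∈ Finset.Iic b,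
          ((∏ i, ζ i ^ a i) * q16 l ^ W16 C a * J a)
            * (epsM l (m - b) * (∏ i, (qP (q16 l) (b i - a i))⁻¹)) := by
    refine Finset.sum_congr rfl fun b _ => ?_
    rw [hJ.2 b, Finset.mul_sum]
    refine Finset.sum_congr rfl fun a _ => ?_
    rw [← Finset.prod_inv_distrib]
    ring
  rw [step1, sum_Iic_swap m (fun b a => ((∏ i, ζ i ^ a i) * q16 l ^ W16 C a * J a)
      * (epsM l (m - b) * (∏ i, (qP (q16 l) (b i - a i))⁻¹)))]
  have step2 : ∀ a ∈ Finset.Iic m,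
      ∑ b ∈ Finset.Icc a m, ((∏ i, ζ i ^ a i) * q16 l ^ W16 C a * J a)
          * (epsM l (m - b) * (∏ i, (qP (q16 l) (b i - a i))⁻¹))
      = ((∏ i, ζ i ^ a i) * q16 l ^ W16 C a * J a) * (if m - a = 0 then 1 else 0) := by
    intro a ha
    rw [← Finset.mul_sum]
    congr 1
    rw [sum_Icc_shift a m _ (Finset.mem_Iic.mp ha)]
    have step3 : ∀ d ∈ Finset.Iic (m - a),
        epsM l (m - (a + d)) * (∏ i, (qP (q16 l) ((a + d) i - a i))⁻¹)
          = epsM l ((m - a) - d) * ∏ i, (qP (q16 l) (d i))⁻¹ := by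
      intro d hd
      have e1 : m - (a + d) = (m - a) - d := funext fun i => by
        simp only [Pi.add_apply, Pi.sub_apply]
        omega
      have e2 : ∀ i : Fin l, (a + d) i - a i = d i := fun i => by
        simp only [Pi.add_apply]
        omega
      rw [e1]
      congr 1
      exact Finset.prod_congr rfl fun i _ => by rw [e2 i]
    rw [Finset.sum_congr rfl step3]
    exact eulerM' l (m - a)
  rw [Finset.sum_congr rfl step2]
  rw [Finset.sum_eq_single_of_mem m (Finset.mem_Iic.mpr le_rfl)]
  · rw [show m - m = 0 from funext fun i => by change m i - m i = 0; omega,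
      if_pos rfl, mul_one]
  · intro a ha hne
    rw [if_neg (pi_sub_ne_zero (Finset.mem_Iic.mp ha) hne), mul_zero]
lemma step3' (l : ℕ) (C : Matrix (Fin l) (Fin l) ℤ) (hsym : C.IsSymm)
    (hdiag : ∀ i, C i i = 2) (ν α δ : Fin l → ℕ) (h : α ≤ δ) :
    Zp l (δ - α) * q16 l ^ (Bl C (ν + α) (δ - α) + W16 C (δ - α))
      = Zp l δ * q16 l ^ (Bl C ν δ + W16 C δ)
        * ((Zp l α)⁻¹ * q16 l ^ (-(Bl C ν α + W16 C α))) := by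
  obtain ⟨γ, rfl⟩ : ∃ γ, δ = α + γ := by
    refine ⟨δ - α, funext fun i => ?_⟩
    have h2 : α i ≤ δ i := h i
    change δ i = α i + (δ i - α i)
    omega
  have e : (α + γ) - α = γ := funext fun i => by
    change α i + γ i - α i = γ i; omega
  rw [e, exp1 C hsym hdiag ν α γ, sub_eq_add_neg, q_zpow_add, Zp_add]
  have hz := Zp_ne_zero l α
  field_simp

lemma step5 (l : ℕ) (C : Matrix (Fin l) (Fin l) ℤ) (hsym : C.IsSymm)
    (hdiag : ∀ i, C i i = 2)
    (Jneg : (Fin l → ℕ) → (Fin l → ℕ) → F16 l)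
    (hJneg : ∀ a, IsFermC C (q16 l)
      (fun i => (z16 l i)⁻¹ * q16 l ^ (-(Cv C a i) + 2)) (Jneg a))
    (ν α : Fin l → ℕ) :
    (Zp l α)⁻¹ * q16 l ^ (-(Bl C ν α + W16 C α)) * Jneg (ν + α) α
      = ∑ b ∈ Finset.Iic α, epsM l (α - b) * Jneg (ν + α) b := by
  have h := inv_rec l C _ _ (hJneg (ν + α)) α
  simp only [prodvar_neg l (ν + α) α] at h
  rw [h, ← exp2 C hsym hdiag ν α, q_zpow_add]
  ring

set_option maxHeartbeats 1000000 in
lemma main16 (l : ℕ) (C : Matrix (Fin l) (Fin l) ℤ) (hsym : C.IsSymm)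
    (hdiag : ∀ i, C i i = 2)
    (Jneg Jpos : (Fin l → ℕ) → (Fin l → ℕ) → F16 l)
    (hJneg : ∀ a, IsFermC C (q16 l)
      (fun i => (z16 l i)⁻¹ * q16 l ^ (-(Cv C a i) + 2)) (Jneg a))
    (hJpos : ∀ a, IsFermC C (q16 l)
      (fun i => z16 l i * q16 l ^ (Cv C a i)) (Jpos a)) :
    ∀ N : ℕ, ∀ β : Fin l → ℕ, (∑ i, β i) ≤ N → ∀ ν : Fin l → ℕ,
      ∑ α ∈ Finset.Iic β, Jneg (ν + α) α * Jpos (ν + α) (β - α)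
        = ∏ i, (qP (q16 l) (β i))⁻¹ := by
  intro N
  induction N with
  | zero =>
    intro β hβ ν
    have hβ0 : β = 0 := funext fun i => by
      have h1 : β i ≤ ∑ j, β j :=
        Finset.single_le_sum (f := β) (fun j _ => Nat.zero_le _) (Finset.mem_univ i)
      change β i = 0
      omega
    subst hβ0
    have hIic : Finset.Iic (0 : Fin l → ℕ) = {0} := by
      ext x
      simp [Finset.mem_Iic, le_zero_iff]
    rw [hIic, Finset.sum_singleton, add_zero, tsub_zero, (hJneg ν).1, (hJpos ν).1]
    simp [qP_zero]
  | succ N ih =>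
    intro β hβ ν
    by_cases hble : (∑ i, β i) ≤ N
    · exact ih β hble ν
    push_neg at hble
    have hβ0 : β ≠ 0 := by
      intro h
      subst h
      simp at hble
    -- Step A: expand the Jpos factor via its recursion
    have stepA : ∀ α ∈ Finset.Iic β,
        Jneg (ν + α) α * Jpos (ν + α) (β - α)
          = ∑ c ∈ Finset.Iic (β - α),
              Zp l c * q16 l ^ (Bl C (ν + α) c + W16 C c)
                * (∏ i, (qP (q16 l) ((β - α - c) i))⁻¹)
                * (Jneg (ν + α) α * Jpos (ν + α) c) := by
      intro α _
      rw [(hJpos (ν + α)).2 (β - α), Finset.mul_sum]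
      refine Finset.sum_congr rfl fun c _ => ?_
      have e1 : ∏ i, (qP (q16 l) ((β - α - c) i))⁻¹
          = (∏ i, qP (q16 l) ((β - α) i - c i))⁻¹ := Finset.prod_inv_distrib _
      simp only [prodvar_pos l (ν + α) c]
      rw [q_zpow_add, e1]
      ring
    have chain1 : ∑ α ∈ Finset.Iic β, Jneg (ν + α) α * Jpos (ν + α) (β - α)
        = ∑ δ ∈ Finset.Iic β, ∑ α ∈ Finset.Iic δ,
            Zp l (δ - α) * q16 l ^ (Bl C (ν + α) (δ - α) + W16 C (δ - α))
              * (∏ i, (qP (q16 l) ((β - α - (δ - α)) i))⁻¹)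
              * (Jneg (ν + α) α * Jpos (ν + α) (δ - α)) := by
      rw [Finset.sum_congr rfl stepA]
      exact sum_pair_reindex β (fun α c =>
        Zp l c * q16 l ^ (Bl C (ν + α) c + W16 C c)
          * (∏ i, (qP (q16 l) ((β - α - c) i))⁻¹)
          * (Jneg (ν + α) α * Jpos (ν + α) c))
    -- Step C: extract δ-dependent factors
    have stepC : ∀ δ ∈ Finset.Iic β,
        (∑ α ∈ Finset.Iic δ,
          Zp l (δ - α) * q16 l ^ (Bl C (ν + α) (δ - α) + W16 C (δ - α))
            * (∏ i, (qP (q16 l) ((β - α - (δ - α)) i))⁻¹)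
            * (Jneg (ν + α) α * Jpos (ν + α) (δ - α)))
        = Zp l δ * q16 l ^ (Bl C ν δ + W16 C δ) * (∏ i, (qP (q16 l) ((β - δ) i))⁻¹)
            * ∑ α ∈ Finset.Iic δ,
                ((Zp l α)⁻¹ * q16 l ^ (-(Bl C ν α + W16 C α)) * Jneg (ν + α) α)
                  * Jpos (ν + α) (δ - α) := by
      intro δ hδ
      rw [Finset.mul_sum]
      refine Finset.sum_congr rfl fun α hα => ?_
      have hαδ : α ≤ δ := Finset.mem_Iic.mp hα
      have e2 : β - α - (δ - α) = β - δ := funext fun i => by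
        have h1 : α i ≤ δ i := hαδ i
        change β i - α i - (δ i - α i) = β i - δ i
        omega
      rw [e2, step3' l C hsym hdiag ν α δ hαδ]
      ring
    -- Step D: apply the inverse recursion and reindex
    have stepD : ∀ δ : Fin l → ℕ,
        (∑ α ∈ Finset.Iic δ,
            ((Zp l α)⁻¹ * q16 l ^ (-(Bl C ν α + W16 C α)) * Jneg (ν + α) α)
              * Jpos (ν + α) (δ - α))
        = ∑ d ∈ Finset.Iic δ, epsM l d *
            ∑ b ∈ Finset.Iic (δ - d),
              Jneg ((ν + d) + b) b * Jpos ((ν + d) + b) ((δ - d) - b) := by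
      intro δ
      have h1 : ∀ α ∈ Finset.Iic δ,
          ((Zp l α)⁻¹ * q16 l ^ (-(Bl C ν α + W16 C α)) * Jneg (ν + α) α)
            * Jpos (ν + α) (δ - α)
          = ∑ b ∈ Finset.Iic α,
              (epsM l (α - b) * Jneg (ν + α) b) * Jpos (ν + α) (δ - α) := by
        intro α _
        rw [step5 l C hsym hdiag Jneg hJneg ν α, Finset.sum_mul]
      rw [Finset.sum_congr rfl h1]
      rw [sum_pair_reindex2 δ (fun α b =>
        (epsM l (α - b) * Jneg (ν + α) b) * Jpos (ν + α) (δ - α))]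
      refine Finset.sum_congr rfl fun d hd => ?_
      rw [Finset.mul_sum]
      refine Finset.sum_congr rfl fun b hb => ?_
      have e3 : (d + b) - b = d := funext fun i => by
        change d i + b i - b i = d i; omega
      have e4 : ν + (d + b) = (ν + d) + b := by rw [add_assoc]
      have e5 : δ - (d + b) = (δ - d) - b := funext fun i => by
        change δ i - (d i + b i) = δ i - d i - b i; omega
      rw [e3, e4, e5]
      ring
    -- weight facts
    have hwtβ : (∑ i, β i) = N + 1 := by omega
    have wt_sub : ∀ δ d : Fin l → ℕ, d ≤ δ →
        (∑ i, (δ - d) i) + (∑ i, d i) = ∑ i, δ i := by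
      intro δ d hdδ
      rw [← Finset.sum_add_distrib]
      refine Finset.sum_congr rfl fun i _ => ?_
      have h1 : d i ≤ δ i := hdδ i
      change δ i - d i + d i = δ i
      omega
    -- the inner sums via the induction hypothesis
    have QinEq1 : ∀ δ ∈ Finset.Iic β, δ ≠ β →
        (∑ d ∈ Finset.Iic δ, epsM l d *
            ∑ b ∈ Finset.Iic (δ - d),
              Jneg ((ν + d) + b) b * Jpos ((ν + d) + b) ((δ - d) - b))
          = if δ = 0 then 1 else 0 := by
      intro δ hδ hδβ
      have hδβ' : δ ≤ β := Finset.mem_Iic.mp hδ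
      have hwtδ : (∑ i, δ i) < ∑ i, β i := by
        apply Finset.sum_lt_sum (fun i _ => hδβ' i)
        by_contra hc
        push_neg at hc
        apply hδβ
        funext i
        have h1 : δ i ≤ β i := hδβ' i
        have h2 : β i ≤ δ i := hc i (Finset.mem_univ i)
        omega
      have h2 : ∀ d ∈ Finset.Iic δ,
          epsM l d * (∑ b ∈ Finset.Iic (δ - d),
            Jneg ((ν + d) + b) b * Jpos ((ν + d) + b) ((δ - d) - b))
          = epsM l d * ∏ i, (qP (q16 l) ((δ - d) i))⁻¹ := by
        intro d hd
        have hdδ : d ≤ δ := Finset.mem_Iic.mp hd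
        have hwts := wt_sub δ d hdδ
        rw [ih (δ - d) (by omega) (ν + d)]
      rw [Finset.sum_congr rfl h2]
      exact eulerM l δ
    have QinEq2 :
        (∑ d ∈ Finset.Iic β, epsM l d *
            ∑ b ∈ Finset.Iic (β - d),
              Jneg ((ν + d) + b) b * Jpos ((ν + d) + b) ((β - d) - b))
          = (∑ α ∈ Finset.Iic β, Jneg (ν + α) α * Jpos (ν + α) (β - α))
            - ∏ i, (qP (q16 l) (β i))⁻¹ := by
      have hsplit : (∑ d ∈ Finset.Iic β, (epsM l d *
            (∑ b ∈ Finset.Iic (β - d),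
              Jneg ((ν + d) + b) b * Jpos ((ν + d) + b) ((β - d) - b))
            - epsM l d * ∏ i, (qP (q16 l) ((β - d) i))⁻¹))
          = (∑ α ∈ Finset.Iic β, Jneg (ν + α) α * Jpos (ν + α) (β - α))
            - ∏ i, (qP (q16 l) (β i))⁻¹ := by
        rw [Finset.sum_eq_single_of_mem 0 (Finset.mem_Iic.mpr (by intro i; exact Nat.zero_le _))]
        · rw [epsM_zero, one_mul, one_mul, add_zero, tsub_zero]
        · intro d hd hd0
          have hdβ : d ≤ β := Finset.mem_Iic.mp hd
          have hwts := wt_sub β d hdβ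
          have hd1 : 1 ≤ ∑ i, d i := by
            obtain ⟨i0, hi0⟩ : ∃ i, d i ≠ 0 := by
              by_contra hc
              push_neg at hc
              exact hd0 (funext hc)
            have := Finset.single_le_sum (f := d) (fun j _ => Nat.zero_le _) (Finset.mem_univ i0)
            omega
          rw [ih (β - d) (by omega) (ν + d), sub_self]
      rw [← hsplit, Finset.sum_sub_distrib]
      have heul : (∑ d ∈ Finset.Iic β, epsM l d * ∏ i, (qP (q16 l) ((β - d) i))⁻¹)
          = 0 := by
        have := eulerM l β
        rw [if_neg hβ0] at this
        exact this
      rw [heul, sub_zero]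
    -- assemble
    have key : ∀ δ ∈ Finset.Iic β,
        Zp l δ * q16 l ^ (Bl C ν δ + W16 C δ) * (∏ i, (qP (q16 l) ((β - δ) i))⁻¹)
            * (∑ d ∈ Finset.Iic δ, epsM l d *
                ∑ b ∈ Finset.Iic (δ - d),
                  Jneg ((ν + d) + b) b * Jpos ((ν + d) + b) ((δ - d) - b))
        = (if δ = 0 then (∏ i, (qP (q16 l) (β i))⁻¹) else 0)
          + (if δ = β then Zp l β * q16 l ^ (Bl C ν β + W16 C β)
              * ((∑ α ∈ Finset.Iic β, Jneg (ν + α) α * Jpos (ν + α) (β - α))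
                  - ∏ i, (qP (q16 l) (β i))⁻¹) else 0) := by
      intro δ hδ
      by_cases hδβ : δ = β
      · rw [hδβ, QinEq2, if_neg hβ0, if_pos rfl, zero_add]
        have e6 : ∏ i, (qP (q16 l) ((β - β) i))⁻¹ = 1 := by
          rw [Finset.prod_congr rfl (fun i (_ : i ∈ Finset.univ) => by
            rw [show (β - β) i = 0 from by change β i - β i = 0; omega, qP_zero, inv_one])]
          exact Finset.prod_const_one
        rw [e6, mul_one]
      · rw [QinEq1 δ hδ hδβ, if_neg hδβ, add_zero]
        by_cases hδ0 : δ = 0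
        · subst hδ0
          rw [if_pos rfl, if_pos rfl, mul_one, Zp_zero, Bl_zero_right, W16_zero, add_zero,
            zpow_zero, one_mul, one_mul, tsub_zero]
        · rw [if_neg hδ0, if_neg hδ0, mul_zero]
    -- final equation
    have heq : (∑ α ∈ Finset.Iic β, Jneg (ν + α) α * Jpos (ν + α) (β - α))
        = (∏ i, (qP (q16 l) (β i))⁻¹)
          + Zp l β * q16 l ^ (Bl C ν β + W16 C β)
            * ((∑ α ∈ Finset.Iic β, Jneg (ν + α) α * Jpos (ν + α) (β - α))
                - ∏ i, (qP (q16 l) (β i))⁻¹) := by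
      calc (∑ α ∈ Finset.Iic β, Jneg (ν + α) α * Jpos (ν + α) (β - α))
          = ∑ δ ∈ Finset.Iic β,
              (Zp l δ * q16 l ^ (Bl C ν δ + W16 C δ) * (∏ i, (qP (q16 l) ((β - δ) i))⁻¹)
                * (∑ d ∈ Finset.Iic δ, epsM l d *
                    ∑ b ∈ Finset.Iic (δ - d),
                      Jneg ((ν + d) + b) b * Jpos ((ν + d) + b) ((δ - d) - b))) := by
            rw [chain1, Finset.sum_congr rfl stepC]
            refine Finset.sum_congr rfl fun δ hδ => ?_
            rw [stepD δ]
        _ = ∑ δ ∈ Finset.Iic β,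
              ((if δ = 0 then (∏ i, (qP (q16 l) (β i))⁻¹) else 0)
                + (if δ = β then Zp l β * q16 l ^ (Bl C ν β + W16 C β)
                    * ((∑ α ∈ Finset.Iic β, Jneg (ν + α) α * Jpos (ν + α) (β - α))
                        - ∏ i, (qP (q16 l) (β i))⁻¹) else 0)) :=
            Finset.sum_congr rfl key
        _ = (∏ i, (qP (q16 l) (β i))⁻¹)
              + Zp l β * q16 l ^ (Bl C ν β + W16 C β)
                * ((∑ α ∈ Finset.Iic β, Jneg (ν + α) α * Jpos (ν + α) (β - α))
                    - ∏ i, (qP (q16 l) (β i))⁻¹) := by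
            rw [Finset.sum_add_distrib, Finset.sum_ite_eq' (Finset.Iic β) (0 : Fin l → ℕ),
              Finset.sum_ite_eq' (Finset.Iic β) β]
            rw [if_pos (Finset.mem_Iic.mpr (by intro i; exact Nat.zero_le _)),
              if_pos (Finset.mem_Iic.mpr le_rfl)]
    have hu : Zp l β * q16 l ^ (Bl C ν β + W16 C β) ≠ 1 :=
      monomial_ne_one l β (Bl C ν β + W16 C β) hβ0
    have hzero : ((∑ α ∈ Finset.Iic β, Jneg (ν + α) α * Jpos (ν + α) (β - α))
        - ∏ i, (qP (q16 l) (β i))⁻¹)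
        * (1 - Zp l β * q16 l ^ (Bl C ν β + W16 C β)) = 0 := by
      linear_combination heq
    rcases mul_eq_zero.mp hzero with h | h
    · exact sub_eq_zero.mp h
    · exact absurd (by linear_combination -h) hu

theorem stmt_16 (l : ℕ) (hl : 1 ≤ l) (C : Matrix (Fin l) (Fin l) ℤ)
    (hsym : C.IsSymm) (hdiag : ∀ i, C i i = 2)
    (hoff : ∀ i j, i ≠ j → C i j = 0 ∨ C i j = -1)
    (hposdef : ∀ x : Fin l → ℤ, x ≠ 0 → 0 < ∑ i, ∑ j, C i j * x i * x j)
    -- for each a, J in the substituted variables z_i⁻¹ q^{−(Ca)_i + 2}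
    (Jneg : (Fin l → ℕ) → (Fin l → ℕ) → F16 l)
    (hJneg : ∀ a, IsFermC C (q16 l)
      (fun i => (z16 l i)⁻¹ * q16 l ^ (-(Cv C a i) + 2)) (Jneg a))
    -- for each a, J in the substituted variables z_i q^{(Ca)_i}
    (Jpos : (Fin l → ℕ) → (Fin l → ℕ) → F16 l)
    (hJpos : ∀ a, IsFermC C (q16 l)
      (fun i => z16 l i * q16 l ^ (Cv C a i)) (Jpos a)) :
    ∀ m : Fin l → ℕ,
      ∑ a ∈ Finset.Iic m, Jneg a a * Jpos a (m - a)
      = ∏ i, (qP (q16 l) (m i))⁻¹ := by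
  intro m
  have h := main16 l C hsym hdiag Jneg Jpos hJneg hJpos (∑ i, m i) m le_rfl 0
  rw [← h]
  refine Finset.sum_congr rfl fun a _ => ?_
  rw [zero_add]

end
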